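/- arXiv:math/0001136 — 3 statements merged into one kernel-verified Lean document; each statement's English description precedes it below -/
import Mathlib

section
/- Let R be a commutative ring, A a bialgebra over R with comultiplication Δ and counit ε, and let F be a Drinfeld twist for A. Then the twisted comultiplication Δ_F(a) = F · Δ(a) · F⁻¹ is coassociative: (Δ_F ⊗ id) ∘ Δ_F = (id ⊗ Δ_F) ∘ Δ_F as maps A → A ⊗ A ⊗ A. -/
open TensorProduct

noncomputable section

variable {R A : Type*} [CommRing R] [Ring A] [Algebra R A]

/-- The embedding `A ⊗ A → A ⊗ (A ⊗ A)`, `x ⊗ y ↦ x ⊗ (y ⊗ 1)`, i.e. `F ↦ F₁₂`. -/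
def emb12 : A ⊗[R] A →ₗ[R] A ⊗[R] (A ⊗[R] A) :=
  TensorProduct.map LinearMap.id ((TensorProduct.mk R A A).flip 1)

/-- The embedding `A ⊗ A → A ⊗ (A ⊗ A)`, `x ↦ 1 ⊗ x`, i.e. `F ↦ F₂₃`. -/
def emb23 : A ⊗[R] A →ₗ[R] A ⊗[R] (A ⊗[R] A) :=
  TensorProduct.mk R A (A ⊗[R] A) 1

/-- `D ⊗ id : A ⊗ A → A ⊗ (A ⊗ A)` (via the associator). -/
def tensorFst (D : A →ₗ[R] A ⊗[R] A) : A ⊗[R] A →ₗ[R] A ⊗[R] (A ⊗[R] A) :=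
  (TensorProduct.assoc R A A A).toLinearMap ∘ₗ TensorProduct.map D LinearMap.id

/-- `id ⊗ D : A ⊗ A → A ⊗ (A ⊗ A)`. -/
def tensorSnd (D : A →ₗ[R] A ⊗[R] A) : A ⊗[R] A →ₗ[R] A ⊗[R] (A ⊗[R] A) :=
  TensorProduct.map LinearMap.id D

/-- `e ⊗ id : A ⊗ A → A` (via `R ⊗ A ≅ A`). -/
def counitFst (e : A →ₗ[R] R) : A ⊗[R] A →ₗ[R] A :=
  (TensorProduct.lid R A).toLinearMap ∘ₗ TensorProduct.map e LinearMap.id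

/-- `id ⊗ e : A ⊗ A → A` (via `A ⊗ R ≅ A`). -/
def counitSnd (e : A →ₗ[R] R) : A ⊗[R] A →ₗ[R] A :=
  (TensorProduct.rid R A).toLinearMap ∘ₗ TensorProduct.map LinearMap.id e

/-- The comultiplication `D` twisted by `F`: `a ↦ F * D a * F⁻¹`. -/
def twistMap (F Finv : A ⊗[R] A) (D : A →ₗ[R] A ⊗[R] A) : A →ₗ[R] A ⊗[R] A :=
  LinearMap.mulRight R Finv ∘ₗ LinearMap.mulLeft R F ∘ₗ D

/-- `F` (with two-sided inverse `Finv`) is a Drinfeld twist with respect to the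
comultiplication `D` and the counit `e`: it is invertible, satisfies the cocycle equation
`F₁₂ · (D ⊗ id)(F) = F₂₃ · (id ⊗ D)(F)`, and the normalization
`(e ⊗ id)(F) = 1 = (id ⊗ e)(F)`. -/
def IsDrinfeldTwist (D : A →ₗ[R] A ⊗[R] A) (e : A →ₗ[R] R) (F Finv : A ⊗[R] A) : Prop :=
  F * Finv = 1 ∧ Finv * F = 1 ∧
    emb12 F * tensorFst D F = emb23 F * tensorSnd D F ∧
    counitFst e F = 1 ∧ counitSnd e F = 1


section AuxLemmas

variable {R A : Type*} [CommRing R] [Ring A] [Algebra R A]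

lemma emb12_eq_assoc (z : A ⊗[R] A) :
    emb12 z = TensorProduct.assoc R A A A (z ⊗ₜ (1 : A)) := by
  induction z using TensorProduct.induction_on with
  | zero => simp [emb12]
  | tmul x y => rfl
  | add u v hu hv => rw [map_add, add_tmul, map_add, hu, hv]

lemma assoc_mul (u v : (A ⊗[R] A) ⊗[R] A) :
    TensorProduct.assoc R A A A (u * v)
      = TensorProduct.assoc R A A A u * TensorProduct.assoc R A A A v :=
  map_mul (Algebra.TensorProduct.assoc R R R A A A) u v

lemma emb12_mul (x y : A ⊗[R] A) : emb12 (x * y) = emb12 x * emb12 y := by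
  rw [emb12_eq_assoc, emb12_eq_assoc, emb12_eq_assoc, ← assoc_mul,
    Algebra.TensorProduct.tmul_mul_tmul, one_mul]

lemma emb12_one : emb12 (1 : A ⊗[R] A) = 1 := by
  rw [emb12_eq_assoc]
  exact map_one (Algebra.TensorProduct.assoc R R R A A A)

lemma emb23_apply (z : A ⊗[R] A) : emb23 (R := R) z = (1 : A) ⊗ₜ z := rfl

lemma emb23_mul (x y : A ⊗[R] A) : emb23 (R := R) (x * y) = emb23 x * emb23 y := by
  rw [emb23_apply, emb23_apply, emb23_apply, Algebra.TensorProduct.tmul_mul_tmul, one_mul]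

lemma emb23_one : emb23 (R := R) (1 : A ⊗[R] A) = 1 := rfl

lemma twistMap_apply (F Finv : A ⊗[R] A) (D : A →ₗ[R] A ⊗[R] A) (a : A) :
    twistMap F Finv D a = F * D a * Finv := rfl

lemma tensorFst_twist (F Finv : A ⊗[R] A) (D : A →ₗ[R] A ⊗[R] A) (z : A ⊗[R] A) :
    tensorFst (twistMap F Finv D) z = emb12 F * tensorFst D z * emb12 Finv := by
  induction z using TensorProduct.induction_on with
  | zero => simp
  | tmul x y =>
    have h1 : tensorFst (twistMap F Finv D) (x ⊗ₜ y)
        = TensorProduct.assoc R A A A ((F * D x * Finv) ⊗ₜ y) := rfl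
    have h2 : tensorFst D (x ⊗ₜ y) = TensorProduct.assoc R A A A (D x ⊗ₜ y) := rfl
    have h3 : (F * D x * Finv) ⊗ₜ[R] y
        = (F ⊗ₜ (1 : A)) * (D x ⊗ₜ y) * (Finv ⊗ₜ (1 : A)) := by
      rw [Algebra.TensorProduct.tmul_mul_tmul, Algebra.TensorProduct.tmul_mul_tmul,
        one_mul, mul_one]
    rw [h1, h2, h3, assoc_mul, assoc_mul, emb12_eq_assoc, emb12_eq_assoc]
  | add u v hu hv => simp [map_add, hu, hv, mul_add, add_mul]

lemma tensorSnd_twist (F Finv : A ⊗[R] A) (D : A →ₗ[R] A ⊗[R] A) (z : A ⊗[R] A) :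
    tensorSnd (twistMap F Finv D) z = emb23 F * tensorSnd D z * emb23 Finv := by
  induction z using TensorProduct.induction_on with
  | zero => simp
  | tmul x y =>
    have h1 : tensorSnd (twistMap F Finv D) (x ⊗ₜ y) = x ⊗ₜ (F * D y * Finv) := rfl
    have h2 : tensorSnd D (x ⊗ₜ y) = x ⊗ₜ (D y) := rfl
    rw [h1, h2, emb23_apply, emb23_apply, Algebra.TensorProduct.tmul_mul_tmul,
      Algebra.TensorProduct.tmul_mul_tmul, one_mul, mul_one]
  | add u v hu hv => simp [map_add, hu, hv, mul_add, add_mul]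

end AuxLemmas

section BialgAux

variable {R A : Type*} [CommRing R] [Ring A] [Bialgebra R A]

lemma tensorFst_comul_mul (x y : A ⊗[R] A) :
    tensorFst (Coalgebra.comul (R := R) (A := A)) (x * y)
      = tensorFst Coalgebra.comul x * tensorFst Coalgebra.comul y := by
  have key : ∀ z : A ⊗[R] A, tensorFst (Coalgebra.comul (R := R) (A := A)) z
      = (Algebra.TensorProduct.assoc R R R A A A).toAlgHom.comp
          (Algebra.TensorProduct.map (Bialgebra.comulAlgHom R A) (AlgHom.id R A)) z := by
    intro z
    induction z using TensorProduct.induction_on with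
    | zero => simp
    | tmul x y => rfl
    | add u v hu hv => simp [map_add, hu, hv]
  rw [key, key, key, map_mul]

lemma tensorFst_comul_one :
    tensorFst (Coalgebra.comul (R := R) (A := A)) 1 = 1 := by
  have h1 : (1 : A ⊗[R] A) = (1 : A) ⊗ₜ (1 : A) := rfl
  have : tensorFst (Coalgebra.comul (R := R) (A := A)) ((1 : A) ⊗ₜ (1 : A))
      = TensorProduct.assoc R A A A ((Coalgebra.comul (R := R) (1 : A)) ⊗ₜ (1 : A)) := rfl
  rw [h1, this, Bialgebra.comul_one]
  exact map_one (Algebra.TensorProduct.assoc R R R A A A)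

lemma tensorSnd_comul_mul (x y : A ⊗[R] A) :
    tensorSnd (Coalgebra.comul (R := R) (A := A)) (x * y)
      = tensorSnd Coalgebra.comul x * tensorSnd Coalgebra.comul y := by
  have key : ∀ z : A ⊗[R] A, tensorSnd (Coalgebra.comul (R := R) (A := A)) z
      = (Algebra.TensorProduct.map (AlgHom.id R A) (Bialgebra.comulAlgHom R A)) z := by
    intro z
    induction z using TensorProduct.induction_on with
    | zero => simp
    | tmul x y => rfl
    | add u v hu hv => simp [map_add, hu, hv]
  rw [key, key, key, map_mul]

lemma tensorSnd_comul_one :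
    tensorSnd (Coalgebra.comul (R := R) (A := A)) 1 = 1 := by
  have h1 : (1 : A ⊗[R] A) = (1 : A) ⊗ₜ (1 : A) := rfl
  have : tensorSnd (Coalgebra.comul (R := R) (A := A)) ((1 : A) ⊗ₜ (1 : A))
      = (1 : A) ⊗ₜ (Coalgebra.comul (R := R) (1 : A)) := rfl
  rw [h1, this, Bialgebra.comul_one]
  rfl

lemma tensorFst_comul_comul (a : A) :
    tensorFst (Coalgebra.comul (R := R) (A := A)) (Coalgebra.comul a)
      = tensorSnd (Coalgebra.comul (R := R) (A := A)) (Coalgebra.comul a) :=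
  Coalgebra.coassoc_apply a

end BialgAux

/-- for a bialgebra `A` and a Drinfeld twist `F`, the twisted comultiplication
`Δ_F(a) = F · Δ(a) · F⁻¹` is coassociative. -/
theorem twisted_comul_coassoc {R A : Type*} [CommRing R] [Ring A] [Bialgebra R A]
    (F Finv : A ⊗[R] A)
    (hF : IsDrinfeldTwist (Coalgebra.comul (R := R) (A := A)) (Coalgebra.counit (R := R) (A := A))
      F Finv) :
    ∀ a : A,
      tensorFst (twistMap F Finv Coalgebra.comul) (twistMap F Finv Coalgebra.comul a) =
        tensorSnd (twistMap F Finv Coalgebra.comul) (twistMap F Finv Coalgebra.comul a) := by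
  obtain ⟨h1, h2, hc, -, -⟩ := hF
  intro a
  have htw : twistMap F Finv (Coalgebra.comul (R := R) (A := A)) a
      = F * Coalgebra.comul a * Finv := rfl
  set D := Coalgebra.comul (R := R) (A := A) with hD
  set tF := tensorFst (R := R) (A := A) D with htF
  set tS := tensorSnd (R := R) (A := A) D with htS
  set G := emb12 F * tF F with hG
  have hGinv1 : G * (tF Finv * emb12 Finv) = 1 := by
    have : G * (tF Finv * emb12 Finv) = emb12 F * (tF F * tF Finv) * emb12 Finv := by
      rw [hG]; simp only [mul_assoc]
    rw [this, htF, hD, ← tensorFst_comul_mul, h1, tensorFst_comul_one, mul_one,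
      ← emb12_mul, h1, emb12_one]
  have hGinv1' : (tF Finv * emb12 Finv) * G = 1 := by
    have : (tF Finv * emb12 Finv) * G = tF Finv * (emb12 Finv * emb12 F) * tF F := by
      rw [hG]; simp only [mul_assoc]
    rw [this, ← emb12_mul, h2, emb12_one, mul_one, htF, hD, ← tensorFst_comul_mul, h2,
      tensorFst_comul_one]
  have hGinv2 : G * (tS Finv * emb23 Finv) = 1 := by
    have hG' : G = emb23 F * tS F := hc
    have : G * (tS Finv * emb23 Finv) = emb23 F * (tS F * tS Finv) * emb23 Finv := by
      rw [hG']; simp only [mul_assoc]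
    rw [this, htS, hD, ← tensorSnd_comul_mul, h1, tensorSnd_comul_one, mul_one,
      ← emb23_mul, h1, emb23_one]
  have hinv_eq : tF Finv * emb12 Finv = tS Finv * emb23 Finv := by
    calc tF Finv * emb12 Finv
        = (tF Finv * emb12 Finv) * (G * (tS Finv * emb23 Finv)) := by rw [hGinv2, mul_one]
      _ = ((tF Finv * emb12 Finv) * G) * (tS Finv * emb23 Finv) := by simp only [mul_assoc]
      _ = tS Finv * emb23 Finv := by rw [hGinv1', one_mul]
  calc tensorFst (twistMap F Finv D) (twistMap F Finv D a)
      = emb12 F * tF (F * D a * Finv) * emb12 Finv := by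
        rw [tensorFst_twist, htw]
    _ = emb12 F * (tF F * tF (D a) * tF Finv) * emb12 Finv := by
        rw [htF, hD, tensorFst_comul_mul, tensorFst_comul_mul]
    _ = G * tF (D a) * (tF Finv * emb12 Finv) := by rw [hG]; simp only [mul_assoc]
    _ = (emb23 F * tS F) * tS (D a) * (tS Finv * emb23 Finv) := by
        rw [← hc, hinv_eq, htF, htS, hD, tensorFst_comul_comul]
    _ = emb23 F * (tS F * tS (D a) * tS Finv) * emb23 Finv := by simp only [mul_assoc]
    _ = emb23 F * tS (F * D a * Finv) * emb23 Finv := by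
        rw [htS, hD, tensorSnd_comul_mul, tensorSnd_comul_mul]
    _ = tensorSnd (twistMap F Finv D) (twistMap F Finv D a) := by
        rw [tensorSnd_twist, htw]
end
end

section
/- Let R be a commutative ring, A a Hopf algebra over R with comultiplication Δ, counit ε and antipode S, and let F be a Drinfeld twist for A with v = Σᵢ fᵢ⁽¹⁾ · S(fᵢ⁽²⁾) invertible in A. Define the twisted antipode S_F(a) = v · S(a) · v⁻¹ and the twisted comultiplication Δ_F(a) = F · Δ(a) · F⁻¹. Then S_F satisfies the antipode axioms for Δ_F: for every a ∈ A, μ((S_F ⊗ id)(Δ_F(a))) = ε(a)·1 and μ((id ⊗ S_F)(Δ_F(a))) = ε(a)·1, where μ is the multiplication map A ⊗ A → A. -/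
open TensorProduct

noncomputable section

variable {R A : Type*} [CommRing R] [Ring A] [Algebra R A]

open TensorProduct Coalgebra HopfAlgebra

noncomputable section
namespace DrinfeldAux
variable {R A : Type*} [CommRing R] [Ring A] [HopfAlgebra R A]

lemma sum_counit_smul_right {ι : Type*} {x : A} (r : Coalgebra.Repr R x ι) :
    ∑ i ∈ r.index, counit (R := R) (r.left i) • r.right i = x := by
  have h := congrArg (TensorProduct.lid R A) (Coalgebra.sum_counit_tmul_eq r)
  simpa only [map_sum, TensorProduct.lid_tmul, TensorProduct.rid_tmul, one_smul] using h

lemma sum_counit_smul_left {ι : Type*} {x : A} (r : Coalgebra.Repr R x ι) :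
    ∑ i ∈ r.index, counit (R := R) (r.right i) • r.left i = x := by
  have h := congrArg (TensorProduct.rid R A) (Coalgebra.sum_tmul_counit_eq r)
  simpa only [map_sum, TensorProduct.lid_tmul, TensorProduct.rid_tmul, one_smul] using h

lemma counit_alg_mul (x y : A) :
    algebraMap R A (counit (R := R) (x * y)) =
      counit (R := R) x • (counit (R := R) y • (1 : A)) := by
  rw [Bialgebra.counit_mul, Algebra.algebraMap_eq_smul_one, mul_smul]

lemma key_expand {ι κ : Type*} (x y : A) (rx : Coalgebra.Repr R x ι) (ry : Coalgebra.Repr R y κ) :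
    algebraMap R A (counit (R := R) (x * y)) =
      ∑ j ∈ rx.index, ∑ l ∈ ry.index,
        antipode (R := R) (rx.left j * ry.left l) * (rx.right j * ry.right l) := by
  rw [← HopfAlgebra.mul_antipode_rTensor_comul_apply (R := R) (x * y), Bialgebra.comul_mul,
    ← rx.eq, ← ry.eq, Finset.sum_mul_sum]
  simp [Algebra.TensorProduct.tmul_mul_tmul, map_sum]

end DrinfeldAux

namespace DrinfeldAux
variable {R A : Type*} [CommRing R] [Ring A] [HopfAlgebra R A]

lemma reassoc {ι κ Λ : Type*} (x : A) (r : Coalgebra.Repr R x ι)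
    (r1 : ∀ i : ι, Coalgebra.Repr R (r.left i) κ)
    (r2 : ∀ i : ι, Coalgebra.Repr R (r.right i) Λ) (f g h : A →ₗ[R] A) :
    ∑ i ∈ r.index, ∑ j ∈ (r1 i).index,
        f ((r1 i).left j) * (g ((r1 i).right j) * h (r.right i))
      = ∑ i ∈ r.index, ∑ j ∈ (r2 i).index,
        f (r.left i) * (g ((r2 i).left j) * h ((r2 i).right j)) := by
  have key := Coalgebra.sum_map_tmul_tmul_eq (R := R) f g h x (repr := r) (a₁ := r1) (a₂ := r2)
  have key2 := congrArg (fun t => (LinearMap.mul' R A ∘ₗ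
    LinearMap.lTensor A (LinearMap.mul' R A)) t) key
  simpa [map_sum] using key2.symm

lemma collapse {ι Λ : Type*} (x : A) (r : Coalgebra.Repr R x ι)
    (r2 : ∀ i : ι, Coalgebra.Repr R (r.right i) Λ) (F : A →ₗ[R] A) (d e : A) :
    ∑ k ∈ r.index, ∑ l ∈ (r2 k).index,
        F (r.left k) *
          ((d * (r2 k).left l) * (antipode (R := R) ((r2 k).right l) * e))
      = F x * (d * e) := by
  have step : ∀ k ∈ r.index, ∑ l ∈ (r2 k).index,
      F (r.left k) *
        ((d * (r2 k).left l) * (antipode (R := R) ((r2 k).right l) * e))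
      = counit (R := R) (r.right k) • (F (r.left k) * (d * e)) := by
    intro k _
    have h1 : F (r.left k) *
        (d * (algebraMap R A (counit (R := R) (r.right k)) * e))
        = counit (R := R) (r.right k) • (F (r.left k) * (d * e)) := by
      rw [← Algebra.smul_def, mul_smul_comm, mul_smul_comm]
    rw [← h1, ← HopfAlgebra.sum_mul_antipode_eq_algebraMap_counit (r2 k), Finset.sum_mul, Finset.mul_sum,
      Finset.mul_sum]
    simp only [mul_assoc]
  rw [Finset.sum_congr rfl step]
  have h2 : ∑ k ∈ r.index, counit (R := R) (r.right k) • F (r.left k) = F x := by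
    have h3 : F (∑ k ∈ r.index, counit (R := R) (r.right k) • r.left k)
        = ∑ k ∈ r.index, counit (R := R) (r.right k) • F (r.left k) := by
      rw [map_sum]
      exact Finset.sum_congr rfl fun k _ => by rw [map_smul]
    rw [← h3, sum_counit_smul_left r]
  calc ∑ k ∈ r.index, counit (R := R) (r.right k) • (F (r.left k) * (d * e))
      = (∑ k ∈ r.index, counit (R := R) (r.right k) • F (r.left k)) * (d * e) := by
        rw [Finset.sum_mul]
        exact Finset.sum_congr rfl fun k _ => by rw [smul_mul_assoc]
    _ = F x * (d * e) := by rw [h2]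

end DrinfeldAux

namespace DrinfeldAux
variable {R A : Type*} [CommRing R] [Ring A] [HopfAlgebra R A]

lemma antipode_one' : antipode (R := R) (1 : A) = 1 := by
  have h := HopfAlgebra.mul_antipode_rTensor_comul_apply (R := R) (A := A) 1
  simpa [Bialgebra.comul_one, Bialgebra.counit_one, Algebra.TensorProduct.one_def] using h

lemma antipode_mul' (a b : A) :
    antipode (R := R) (a * b) = antipode (R := R) b * antipode (R := R) a := by
  classical
  let ra := Coalgebra.Repr.arbitrary R a
  let rb := Coalgebra.Repr.arbitrary R b
  let ra1 : ∀ i : A × A, Coalgebra.Repr R (ra.left i) (A × A) := fun _ => Coalgebra.Repr.arbitrary R _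
  let ra2 : ∀ i : A × A, Coalgebra.Repr R (ra.right i) (A × A) := fun _ => Coalgebra.Repr.arbitrary R _
  let rb1 : ∀ k : A × A, Coalgebra.Repr R (rb.left k) (A × A) := fun _ => Coalgebra.Repr.arbitrary R _
  let rb2 : ∀ k : A × A, Coalgebra.Repr R (rb.right k) (A × A) := fun _ => Coalgebra.Repr.arbitrary R _
  have hSb : ∑ k ∈ rb.index, counit (R := R) (rb.left k) • antipode (R := R) (rb.right k)
      = antipode (R := R) b := by
    have : antipode (R := R) (∑ k ∈ rb.index, counit (R := R) (rb.left k) • rb.right k)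
        = ∑ k ∈ rb.index, counit (R := R) (rb.left k) • antipode (R := R) (rb.right k) := by
      rw [map_sum]; exact Finset.sum_congr rfl fun k _ => by rw [map_smul]
    rw [← this, sum_counit_smul_right rb]
  have hSa : ∑ i ∈ ra.index, counit (R := R) (ra.left i) • antipode (R := R) (ra.right i)
      = antipode (R := R) a := by
    have : antipode (R := R) (∑ i ∈ ra.index, counit (R := R) (ra.left i) • ra.right i)
        = ∑ i ∈ ra.index, counit (R := R) (ra.left i) • antipode (R := R) (ra.right i) := by
      rw [map_sum]; exact Finset.sum_congr rfl fun k _ => by rw [map_smul]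
    rw [← this, sum_counit_smul_right ra]
  -- Step 1
  have e1 : antipode (R := R) b * antipode (R := R) a
      = ∑ i ∈ ra.index, ∑ k ∈ rb.index,
          algebraMap R A (counit (R := R) (ra.left i * rb.left k)) *
            (antipode (R := R) (rb.right k) * antipode (R := R) (ra.right i)) := by
    rw [← hSa, ← hSb, Finset.sum_mul, Finset.sum_comm]
    refine Finset.sum_congr rfl fun i _ => ?_
    rw [Finset.mul_sum]
    refine Finset.sum_congr rfl fun k _ => ?_
    simp only [counit_alg_mul, smul_mul_assoc, one_mul, mul_smul_comm]
    try rw [smul_comm]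
  -- Step 2 : expand the counit factor using the antipode axiom on products
  have e2 : ∀ i ∈ ra.index, ∀ k ∈ rb.index,
      algebraMap R A (counit (R := R) (ra.left i * rb.left k)) *
        (antipode (R := R) (rb.right k) * antipode (R := R) (ra.right i))
      = ∑ j ∈ (ra1 i).index, ∑ l ∈ (rb1 k).index,
          antipode (R := R) ((ra1 i).left j * (rb1 k).left l) *
            (((ra1 i).right j * (rb1 k).right l) *
              (antipode (R := R) (rb.right k) * antipode (R := R) (ra.right i))) := by
    intro i _ k _
    rw [key_expand (ra.left i) (rb.left k) (ra1 i) (rb1 k)]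
    simp only [Finset.sum_mul, mul_assoc]
  -- Step 3 : for fixed (i, j), reassociate and collapse the b-side
  have e3 : ∀ i ∈ ra.index, ∀ j ∈ (ra1 i).index,
      ∑ k ∈ rb.index, ∑ l ∈ (rb1 k).index,
          antipode (R := R) ((ra1 i).left j * (rb1 k).left l) *
            (((ra1 i).right j * (rb1 k).right l) *
              (antipode (R := R) (rb.right k) * antipode (R := R) (ra.right i)))
      = antipode (R := R) ((ra1 i).left j * b) *
          ((ra1 i).right j * antipode (R := R) (ra.right i)) := by
    intro i _ j _
    have hre := reassoc b rb rb1 rb2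
      (antipode (R := R) ∘ₗ LinearMap.mulLeft R ((ra1 i).left j))
      (LinearMap.mulLeft R ((ra1 i).right j))
      (LinearMap.mulRight R (antipode (R := R) (ra.right i)) ∘ₗ antipode (R := R))
    simp only [LinearMap.comp_apply, LinearMap.mulLeft_apply, LinearMap.mulRight_apply] at hre
    rw [hre]
    have hco := collapse b rb rb2
      (antipode (R := R) ∘ₗ LinearMap.mulLeft R ((ra1 i).left j))
      ((ra1 i).right j) (antipode (R := R) (ra.right i))
    simp only [LinearMap.comp_apply, LinearMap.mulLeft_apply] at hco
    exact hco
  -- Step 4 : reassociate and collapse the a-side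
  have e4 : ∑ i ∈ ra.index, ∑ j ∈ (ra1 i).index,
      antipode (R := R) ((ra1 i).left j * b) *
        ((ra1 i).right j * antipode (R := R) (ra.right i))
      = antipode (R := R) (a * b) := by
    have hre := reassoc a ra ra1 ra2
      (antipode (R := R) ∘ₗ LinearMap.mulRight R b)
      (LinearMap.mulLeft R (1 : A))
      (LinearMap.mulRight R (1 : A) ∘ₗ antipode (R := R))
    simp only [LinearMap.comp_apply, LinearMap.mulLeft_apply, LinearMap.mulRight_apply,
      one_mul, mul_one] at hre
    rw [hre]
    have hco := collapse a ra ra2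
      (antipode (R := R) ∘ₗ LinearMap.mulRight R b) (1 : A) (1 : A)
    simp only [LinearMap.comp_apply, LinearMap.mulRight_apply, one_mul, mul_one] at hco
    exact hco
  rw [e1, Finset.sum_congr rfl (fun i hi => Finset.sum_congr rfl (fun k hk => e2 i hi k hk))]
  rw [Finset.sum_congr rfl (fun i _ => Finset.sum_comm)]
  rw [Finset.sum_congr rfl (fun i hi => Finset.sum_congr rfl (fun j hj => e3 i hi j hj)), e4]

end DrinfeldAux
-- ===================== auxiliary machinery =====================
section DrinfeldAuxMachinery
open Coalgebra HopfAlgebra DrinfeldAux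

variable {R A : Type*} [CommRing R] [Ring A] [HopfAlgebra R A]

namespace DrinfeldAux

/-- `nn c (x ⊗ y) = S(x) * c * y`. -/
def nn (c : A) : A ⊗[R] A →ₗ[R] A :=
  LinearMap.mul' R A ∘ₗ
    TensorProduct.map (LinearMap.mulRight R c ∘ₗ antipode (R := R)) LinearMap.id

/-- `mm c (x ⊗ y) = x * c * S(y)`. -/
def mm (c : A) : A ⊗[R] A →ₗ[R] A :=
  LinearMap.mul' R A ∘ₗ
    TensorProduct.map LinearMap.id (LinearMap.mulLeft R c ∘ₗ antipode (R := R))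

@[simp] lemma nn_tmul (c x y : A) :
    nn (R := R) c (x ⊗ₜ y) = antipode (R := R) x * c * y := by
  simp [nn]

@[simp] lemma mm_tmul (c x y : A) :
    mm (R := R) c (x ⊗ₜ y) = x * (c * antipode (R := R) y) := by
  simp [mm]

lemma nn_add (c c' : A) (x : A ⊗[R] A) :
    nn (R := R) (c + c') x = nn c x + nn c' x := by
  induction x using TensorProduct.induction_on with
  | zero => simp
  | tmul p q => simp [mul_add, add_mul]
  | add u w hu hw => rw [map_add, map_add, map_add, hu, hw]; abel

lemma mm_add (c c' : A) (x : A ⊗[R] A) :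
    mm (R := R) (c + c') x = mm c x + mm c' x := by
  induction x using TensorProduct.induction_on with
  | zero => simp
  | tmul p q => simp [mul_add, add_mul]
  | add u w hu hw => rw [map_add, map_add, map_add, hu, hw]; abel

lemma nn_smul (r : R) (c : A) (x : A ⊗[R] A) :
    nn (R := R) (r • c) x = r • nn c x := by
  induction x using TensorProduct.induction_on with
  | zero => simp
  | tmul p q => simp [mul_smul_comm, smul_mul_assoc]
  | add u w hu hw => rw [map_add, map_add, hu, hw, smul_add]

lemma mm_smul (r : R) (c : A) (x : A ⊗[R] A) :
    mm (R := R) (r • c) x = r • mm c x := by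
  induction x using TensorProduct.induction_on with
  | zero => simp
  | tmul p q => simp [mul_smul_comm, smul_mul_assoc]
  | add u w hu hw => rw [map_add, map_add, hu, hw, smul_add]

@[simp] lemma nn_one_right (c : A) : nn (R := R) c (1 : A ⊗[R] A) = c := by
  rw [Algebra.TensorProduct.one_def]
  simp [antipode_one']

@[simp] lemma mm_one_right (c : A) : mm (R := R) c (1 : A ⊗[R] A) = c := by
  rw [Algebra.TensorProduct.one_def]
  simp [antipode_one']

@[simp] lemma nn_zero (x : A ⊗[R] A) : nn (R := R) (0 : A) x = 0 := by
  induction x using TensorProduct.induction_on with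
  | zero => simp
  | tmul p q => simp
  | add u w hu hw => rw [map_add, hu, hw, add_zero]

@[simp] lemma mm_zero (x : A ⊗[R] A) : mm (R := R) (0 : A) x = 0 := by
  induction x using TensorProduct.induction_on with
  | zero => simp
  | tmul p q => simp
  | add u w hu hw => rw [map_add, hu, hw, add_zero]

lemma nn_mul (c : A) (x y : A ⊗[R] A) :
    nn (R := R) c (x * y) = nn (nn c x) y := by
  induction y using TensorProduct.induction_on with
  | zero => simp
  | add y1 y2 h1 h2 => rw [mul_add, map_add, h1, h2, map_add]
  | tmul s t =>
    induction x using TensorProduct.induction_on with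
    | zero => simp
    | add x1 x2 h1 h2 => rw [add_mul, map_add, h1, h2, map_add, nn_add]
    | tmul p r =>
      simp [Algebra.TensorProduct.tmul_mul_tmul, antipode_mul', mul_assoc]

lemma mm_mul (c : A) (x y : A ⊗[R] A) :
    mm (R := R) c (x * y) = mm (mm c y) x := by
  induction y using TensorProduct.induction_on with
  | zero => simp
  | add y1 y2 h1 h2 => rw [mul_add, map_add, h1, h2, map_add, mm_add]
  | tmul s t =>
    induction x using TensorProduct.induction_on with
    | zero => simp
    | add x1 x2 h1 h2 => rw [add_mul, map_add, h1, h2, map_add]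
    | tmul p r =>
      simp [Algebra.TensorProduct.tmul_mul_tmul, antipode_mul', mul_assoc]

lemma nn_one_comul (a : A) :
    nn (R := R) (1 : A) (Coalgebra.comul a) = counit (R := R) a • (1 : A) := by
  have h0 : nn (R := R) (1 : A) =
      LinearMap.mul' R A ∘ₗ LinearMap.rTensor A (antipode (R := R)) := by
    rw [nn, LinearMap.mulRight_one, LinearMap.id_comp]
    rfl
  rw [h0]
  simp [Algebra.algebraMap_eq_smul_one]

lemma mm_one_comul (a : A) :
    mm (R := R) (1 : A) (Coalgebra.comul a) = counit (R := R) a • (1 : A) := by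
  have h0 : mm (R := R) (1 : A) =
      LinearMap.mul' R A ∘ₗ LinearMap.lTensor A (antipode (R := R)) := by
    rw [mm, LinearMap.mulLeft_one, LinearMap.id_comp]
    rfl
  rw [h0]
  simp [Algebra.algebraMap_eq_smul_one]

end DrinfeldAux

end DrinfeldAuxMachinery
-- ===================== algebra homomorphism layer =====================
section DrinfeldAlgHom
open Coalgebra HopfAlgebra DrinfeldAux

variable {R A : Type*} [CommRing R] [Ring A] [HopfAlgebra R A]

namespace DrinfeldAux

/-- `emb12` as an algebra homomorphism. -/
def E12 : A ⊗[R] A →ₐ[R] A ⊗[R] (A ⊗[R] A) :=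
  Algebra.TensorProduct.map (AlgHom.id R A) Algebra.TensorProduct.includeLeft

/-- `emb23` as an algebra homomorphism. -/
def E23 : A ⊗[R] A →ₐ[R] A ⊗[R] (A ⊗[R] A) :=
  Algebra.TensorProduct.includeRight

/-- `tensorFst comul` as an algebra homomorphism. -/
def TF : A ⊗[R] A →ₐ[R] A ⊗[R] (A ⊗[R] A) :=
  (Algebra.TensorProduct.assoc R R R A A A).toAlgHom.comp
    (Algebra.TensorProduct.map (Bialgebra.comulAlgHom R A) (AlgHom.id R A))

/-- `tensorSnd comul` as an algebra homomorphism. -/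
def TS : A ⊗[R] A →ₐ[R] A ⊗[R] (A ⊗[R] A) :=
  Algebra.TensorProduct.map (AlgHom.id R A) (Bialgebra.comulAlgHom R A)

/-- `counitFst counit` as an algebra homomorphism. -/
def CF : A ⊗[R] A →ₐ[R] A :=
  (Algebra.TensorProduct.lid R A).toAlgHom.comp
    (Algebra.TensorProduct.map (Bialgebra.counitAlgHom R A) (AlgHom.id R A))

/-- `counitSnd counit` as an algebra homomorphism. -/
def CS : A ⊗[R] A →ₐ[R] A :=
  (Algebra.TensorProduct.rid R R A).toAlgHom.comp
    (Algebra.TensorProduct.map (AlgHom.id R A) (Bialgebra.counitAlgHom R A))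

lemma emb12_eq (z : A ⊗[R] A) : emb12 z = E12 (R := R) (A := A) z := by
  have : (emb12 : A ⊗[R] A →ₗ[R] A ⊗[R] (A ⊗[R] A)) = (E12 (R := R) (A := A)).toLinearMap := by
    apply TensorProduct.ext'
    intro x y
    simp [emb12, E12]
  rw [this]; rfl

lemma emb23_eq (z : A ⊗[R] A) : emb23 z = E23 (R := R) (A := A) z := by
  have : (emb23 : A ⊗[R] A →ₗ[R] A ⊗[R] (A ⊗[R] A)) = (E23 (R := R) (A := A)).toLinearMap := by
    apply TensorProduct.ext'
    intro x y
    simp [emb23, E23]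
  rw [this]; rfl

lemma assoc_eq (u : A ⊗[R] A) (y : A) :
    (TensorProduct.assoc R A A A) (u ⊗ₜ y)
      = (Algebra.TensorProduct.assoc R R R A A A) (u ⊗ₜ y) := by
  induction u using TensorProduct.induction_on with
  | zero =>
      rw [TensorProduct.zero_tmul, LinearEquiv.map_zero, map_zero]
  | tmul p q => simp [Algebra.TensorProduct.assoc_tmul]
  | add u w hu hw =>
      rw [TensorProduct.add_tmul, map_add, hu, hw, ← map_add, ← TensorProduct.add_tmul]

lemma tensorFst_eq (z : A ⊗[R] A) :
    tensorFst (Coalgebra.comul (R := R)) z = TF (R := R) (A := A) z := by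
  have : (tensorFst (Coalgebra.comul (R := R)) : A ⊗[R] A →ₗ[R] A ⊗[R] (A ⊗[R] A))
      = (TF (R := R) (A := A)).toLinearMap := by
    apply TensorProduct.ext'
    intro x y
    simp only [tensorFst, TF, LinearMap.comp_apply, TensorProduct.map_tmul,
      LinearMap.id_apply, AlgHom.comp_apply, Algebra.TensorProduct.map_tmul,
      AlgHom.coe_id, id_eq, Bialgebra.comulAlgHom_apply, AlgEquiv.toAlgHom_eq_coe,
      AlgHom.coe_coe, AlgHom.toLinearMap_apply, AlgHom.coe_comp, Function.comp_apply]
    exact assoc_eq _ _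
  rw [this]; rfl

lemma tensorSnd_eq (z : A ⊗[R] A) :
    tensorSnd (Coalgebra.comul (R := R)) z = TS (R := R) (A := A) z := by
  have : (tensorSnd (Coalgebra.comul (R := R)) : A ⊗[R] A →ₗ[R] A ⊗[R] (A ⊗[R] A))
      = (TS (R := R) (A := A)).toLinearMap := by
    apply TensorProduct.ext'
    intro x y
    simp [tensorSnd, TS]
  rw [this]; rfl

lemma counitFst_eq (z : A ⊗[R] A) :
    counitFst (Coalgebra.counit (R := R)) z = CF (R := R) (A := A) z := by
  have : (counitFst (Coalgebra.counit (R := R)) : A ⊗[R] A →ₗ[R] A)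
      = (CF (R := R) (A := A)).toLinearMap := by
    apply TensorProduct.ext'
    intro x y
    simp [counitFst, CF, Algebra.TensorProduct.lid_tmul]
  rw [this]; rfl

lemma counitSnd_eq (z : A ⊗[R] A) :
    counitSnd (Coalgebra.counit (R := R)) z = CS (R := R) (A := A) z := by
  have : (counitSnd (Coalgebra.counit (R := R)) : A ⊗[R] A →ₗ[R] A)
      = (CS (R := R) (A := A)).toLinearMap := by
    apply TensorProduct.ext'
    intro x y
    simp [counitSnd, CS, Algebra.TensorProduct.rid_tmul]
  rw [this]; rfl

end DrinfeldAux

end DrinfeldAlgHom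
-- ===================== the key tensor computations =====================
section DrinfeldKey
open Coalgebra HopfAlgebra DrinfeldAux

variable {R A : Type*} [CommRing R] [Ring A] [HopfAlgebra R A]

namespace DrinfeldAux

/-- `Phi (x ⊗ u) = x * nn 1 u`. -/
def Phi : A ⊗[R] (A ⊗[R] A) →ₗ[R] A :=
  LinearMap.mul' R A ∘ₗ TensorProduct.map LinearMap.id (nn (R := R) (1 : A))

@[simp] lemma Phi_tmul (x : A) (u : A ⊗[R] A) :
    Phi (R := R) (x ⊗ₜ u) = x * nn (R := R) (1 : A) u := by
  simp [Phi]

lemma C1 (x y : A ⊗[R] A) :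
    Phi (R := R) (emb23 x * emb12 y) = mm (R := R) (1 : A) y * nn (R := R) (1 : A) x := by
  induction x using TensorProduct.induction_on with
  | zero => simp
  | add x1 x2 h1 h2 => rw [map_add, add_mul, map_add, h1, h2, map_add, mul_add]
  | tmul p q =>
    induction y using TensorProduct.induction_on with
    | zero => simp
    | add y1 y2 h1 h2 => rw [map_add, mul_add, map_add, h1, h2, map_add, add_mul]
    | tmul c d =>
      simp only [emb12, emb23, TensorProduct.map_tmul, TensorProduct.mk_apply,
        LinearMap.id_apply, LinearMap.flip_apply, Algebra.TensorProduct.tmul_mul_tmul,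
        Phi_tmul, nn_tmul, mm_tmul, one_mul, mul_one]
      rw [antipode_mul']
      simp [mul_assoc]

lemma L2 (x d : A) (u w : A ⊗[R] A) :
    Phi (R := R) ((x ⊗ₜ u) * ((TensorProduct.assoc R A A A) (w ⊗ₜ d)))
      = x * (mm (R := R) (1 : A) w * (nn (R := R) (1 : A) u * d)) := by
  induction w using TensorProduct.induction_on with
  | zero =>
      rw [TensorProduct.zero_tmul, LinearEquiv.map_zero, mul_zero, map_zero, map_zero,
        zero_mul, mul_zero]
  | add w1 w2 h1 h2 =>
      rw [TensorProduct.add_tmul, LinearEquiv.map_add, mul_add, map_add, h1, h2, map_add,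
        add_mul, mul_add]
  | tmul p r =>
    induction u using TensorProduct.induction_on with
    | zero =>
        rw [TensorProduct.tmul_zero, zero_mul, map_zero, map_zero, zero_mul, mul_zero,
          mul_zero]
    | add u1 u2 hh1 hh2 =>
        rw [TensorProduct.tmul_add, add_mul, map_add, hh1, hh2, map_add, add_mul, mul_add,
          mul_add]
    | tmul s t =>
      simp only [TensorProduct.assoc_tmul, Algebra.TensorProduct.tmul_mul_tmul,
        Phi_tmul, nn_tmul, mm_tmul, one_mul, mul_one]
      rw [antipode_mul']
      simp [mul_assoc]

lemma C2 (x y : A ⊗[R] A) :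
    Phi (R := R) (tensorSnd (Coalgebra.comul (R := R)) x * tensorFst (Coalgebra.comul (R := R)) y)
      = counitSnd (Coalgebra.counit (R := R)) x * counitFst (Coalgebra.counit (R := R)) y := by
  induction x using TensorProduct.induction_on with
  | zero => simp
  | add x1 x2 h1 h2 => rw [map_add, add_mul, map_add, h1, h2, map_add, add_mul]
  | tmul a b => -- C2

    induction y using TensorProduct.induction_on with
    | zero => simp
    | add y1 y2 h1 h2 => rw [map_add, mul_add, map_add, h1, h2, map_add, mul_add]
    | tmul c d =>
      have hx : tensorSnd (Coalgebra.comul (R := R)) (a ⊗ₜ b) = a ⊗ₜ Coalgebra.comul b := by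
        simp [tensorSnd]
      have hy : tensorFst (Coalgebra.comul (R := R)) (c ⊗ₜ d)
          = (TensorProduct.assoc R A A A) (Coalgebra.comul c ⊗ₜ d) := by
        simp [tensorFst]
      rw [hx, hy, L2, mm_one_comul, nn_one_comul]
      have hcs : counitSnd (Coalgebra.counit (R := R)) (a ⊗ₜ b)
          = Coalgebra.counit (R := R) b • a := by
        simp [counitSnd]
      have hcf : counitFst (Coalgebra.counit (R := R)) (c ⊗ₜ d)
          = Coalgebra.counit (R := R) c • d := by
        simp [counitFst]
      rw [hcs, hcf]
      simp only [smul_mul_assoc, one_mul, mul_smul_comm]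
      try rw [smul_comm]

lemma cocycleB (F Finv : A ⊗[R] A) (hFG : F * Finv = 1) (hGF : Finv * F = 1)
    (hC : emb12 F * tensorFst (Coalgebra.comul (R := R)) F
        = emb23 F * tensorSnd (Coalgebra.comul (R := R)) F) :
    emb23 Finv * emb12 F
      = tensorSnd (Coalgebra.comul (R := R)) F * tensorFst (Coalgebra.comul (R := R)) Finv := by
  have k1 : tensorFst (Coalgebra.comul (R := R)) F * tensorFst (Coalgebra.comul (R := R)) Finv
      = 1 := by
    rw [tensorFst_eq, tensorFst_eq, ← map_mul, hFG, map_one]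
  have k2 : emb23 Finv * emb23 (R := R) (A := A) F = 1 := by
    rw [emb23_eq, emb23_eq, ← map_mul, hGF, map_one]
  calc emb23 Finv * emb12 F
      = emb23 Finv * emb12 F *
          (tensorFst (Coalgebra.comul (R := R)) F * tensorFst (Coalgebra.comul (R := R)) Finv) := by
        rw [k1, mul_one]
    _ = emb23 Finv * (emb12 F * tensorFst (Coalgebra.comul (R := R)) F) *
          tensorFst (Coalgebra.comul (R := R)) Finv := by
        simp only [mul_assoc]
    _ = emb23 Finv * (emb23 F * tensorSnd (Coalgebra.comul (R := R)) F) *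
          tensorFst (Coalgebra.comul (R := R)) Finv := by rw [hC]
    _ = (emb23 Finv * emb23 F) *
          (tensorSnd (Coalgebra.comul (R := R)) F * tensorFst (Coalgebra.comul (R := R)) Finv) := by
        simp only [mul_assoc]
    _ = _ := by rw [k2, one_mul]

lemma G1 (v vinv : A) (x : A ⊗[R] A) :
    LinearMap.mul' R A
        (TensorProduct.map
          (LinearMap.mulRight R vinv ∘ₗ LinearMap.mulLeft R v ∘ₗ antipode (R := R))
          LinearMap.id x)
      = v * nn (R := R) vinv x := by
  induction x using TensorProduct.induction_on with
  | zero => simp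
  | add u w hu hw => rw [map_add, map_add, hu, hw, map_add, mul_add]
  | tmul p q => simp [nn, mul_assoc]

lemma G2 (v vinv : A) (x : A ⊗[R] A) :
    LinearMap.mul' R A
        (TensorProduct.map LinearMap.id
          (LinearMap.mulRight R vinv ∘ₗ LinearMap.mulLeft R v ∘ₗ antipode (R := R)) x)
      = mm (R := R) v x * vinv := by
  induction x using TensorProduct.induction_on with
  | zero => simp
  | add u w hu hw => rw [map_add, map_add, hu, hw, map_add, add_mul]
  | tmul p q => simp [mm, mul_assoc]

end DrinfeldAux

end DrinfeldKey

/-- for a Hopf algebra `A` with antipode `S` and a Drinfeld twist `F`, with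
`v = Σ f⁽¹⁾ · S(f⁽²⁾)` invertible (with inverse `vinv`), the twisted antipode
`S_F(a) = v · S(a) · v⁻¹` satisfies the antipode axioms for the twisted comultiplication
`Δ_F(a) = F · Δ(a) · F⁻¹`: `μ((S_F ⊗ id)(Δ_F a)) = ε(a)·1` and
`μ((id ⊗ S_F)(Δ_F a)) = ε(a)·1`. -/
theorem twisted_antipode_axioms {R A : Type*} [CommRing R] [Ring A] [HopfAlgebra R A]
    (F Finv : A ⊗[R] A)
    (hF : IsDrinfeldTwist (Coalgebra.comul (R := R) (A := A)) (Coalgebra.counit (R := R) (A := A))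
      F Finv)
    (v vinv : A)
    (hv : v = LinearMap.mul' R A
      (TensorProduct.map LinearMap.id (HopfAlgebra.antipode (R := R) (A := A)) F))
    (hvinv : v * vinv = 1 ∧ vinv * v = 1) :
    ∀ a : A,
      LinearMap.mul' R A
          (TensorProduct.map
            (LinearMap.mulRight R vinv ∘ₗ LinearMap.mulLeft R v ∘ₗ
              HopfAlgebra.antipode (R := R) (A := A))
            LinearMap.id
            (twistMap F Finv Coalgebra.comul a)) = Coalgebra.counit (R := R) a • (1 : A) ∧
      LinearMap.mul' R A
          (TensorProduct.map LinearMap.id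
            (LinearMap.mulRight R vinv ∘ₗ LinearMap.mulLeft R v ∘ₗ
              HopfAlgebra.antipode (R := R) (A := A))
            (twistMap F Finv Coalgebra.comul a)) = Coalgebra.counit (R := R) a • (1 : A) := by
  obtain ⟨hFG, hGF, hC, hcF, hcS⟩ := hF
  obtain ⟨hv1, hv2⟩ := hvinv
  have hcfInv : counitFst (Coalgebra.counit (R := R)) Finv = 1 := by
    have h1 : (1 : A) = counitFst (Coalgebra.counit (R := R)) F *
        counitFst (Coalgebra.counit (R := R)) Finv := by
      calc (1 : A) = counitFst (Coalgebra.counit (R := R)) (1 : A ⊗[R] A) := by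
            rw [DrinfeldAux.counitFst_eq, map_one]
        _ = counitFst (Coalgebra.counit (R := R)) (F * Finv) := by rw [hFG]
        _ = _ := by
            rw [DrinfeldAux.counitFst_eq, map_mul, ← DrinfeldAux.counitFst_eq,
              ← DrinfeldAux.counitFst_eq]
    rw [hcF, one_mul] at h1
    exact h1.symm
  have hmm1 : DrinfeldAux.mm (R := R) (1 : A) =
      LinearMap.mul' R A ∘ₗ TensorProduct.map LinearMap.id (HopfAlgebra.antipode (R := R)) := by
    rw [DrinfeldAux.mm, LinearMap.mulLeft_one, LinearMap.id_comp]
  have hv' : v = DrinfeldAux.mm (R := R) (1 : A) F := by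
    rw [hv, hmm1]; rfl
  have key1 : v * DrinfeldAux.nn (R := R) (1 : A) Finv = 1 := by
    have c1 := DrinfeldAux.C1 (R := R) (A := A) Finv F
    rw [DrinfeldAux.cocycleB F Finv hFG hGF hC, DrinfeldAux.C2, hcS, hcfInv, mul_one] at c1
    rw [hv']
    exact c1.symm
  have hvinveq : vinv = DrinfeldAux.nn (R := R) (1 : A) Finv := by
    calc vinv = vinv * (v * DrinfeldAux.nn (R := R) (1 : A) Finv) := by rw [key1, mul_one]
      _ = (vinv * v) * DrinfeldAux.nn (R := R) (1 : A) Finv := by rw [mul_assoc]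
      _ = _ := by rw [hv2, one_mul]
  intro a
  have hX : twistMap F Finv (Coalgebra.comul (R := R)) a
      = F * Coalgebra.comul a * Finv := by
    simp [twistMap]
  constructor
  · rw [DrinfeldAux.G1, hX, DrinfeldAux.nn_mul, DrinfeldAux.nn_mul]
    have h1 : DrinfeldAux.nn (R := R) vinv F = 1 := by
      rw [hvinveq, ← DrinfeldAux.nn_mul, hGF, DrinfeldAux.nn_one_right]
    rw [h1, DrinfeldAux.nn_one_comul, DrinfeldAux.nn_smul, ← hvinveq, mul_smul_comm, hv1]
  · rw [DrinfeldAux.G2, hX, DrinfeldAux.mm_mul, DrinfeldAux.mm_mul]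
    have h2 : DrinfeldAux.mm (R := R) v Finv = 1 := by
      rw [hv', ← DrinfeldAux.mm_mul, hGF, DrinfeldAux.mm_one_right]
    rw [h2, DrinfeldAux.mm_one_comul, DrinfeldAux.mm_smul, ← hv', smul_mul_assoc, hv1]
end
end
end

section
/- Let N ≥ 3. In the Lie algebra of N×N complex matrices, the complex linear span L of the set {(1/2)(E_{11} − E_{NN}), E_{1N}} ∪ {E_{1s} : 2 ≤ s ≤ N−1} ∪ {E_{sN} : 2 ≤ s ≤ N−1} is a Lie subalgebra (closed under the bracket), L is solvable, and L has complex dimension 2N − 2. -/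
noncomputable section

attribute [local instance 100] LieRing.ofAssociativeRing
attribute [local instance 100] LieAlgebra.ofAssociativeAlgebra

/-- `E N i j` is the `N×N` complex matrix with `1` in entry `(i,j)` and `0` elsewhere.
Indices are 0-based, so `E N i j` is the matrix unit `E_{i+1,j+1}` in the 1-based
notation of the paper. -/
def E (N : ℕ) (i j : Fin N) : Matrix (Fin N) (Fin N) ℂ :=
  Matrix.single i j 1

lemma E_apply {N : ℕ} (i j i' j' : Fin N) :
    E N i j i' j' = if i = i' ∧ j = j' then 1 else 0 := rfl

lemma lie_E_E {N : ℕ} (i j k l : Fin N) :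
    ⁅E N i j, E N k l⁆ =
      (if j = k then E N i l else 0) - (if l = i then E N k j else 0) := by
  rw [Ring.lie_def]
  unfold E
  congr 1
  · split_ifs with h
    · subst h; rw [Matrix.single_mul_single_same]; norm_num
    · exact Matrix.single_mul_single_of_ne (c := 1) i j _ h 1
  · split_ifs with h
    · subst h; rw [Matrix.single_mul_single_same]; norm_num
    · exact Matrix.single_mul_single_of_ne (c := 1) k l _ h 1

lemma lie_mem_span_aux {M : Type*} [Ring M] [Algebra ℂ M]
    {s t : Set M} {p : Submodule ℂ M}
    (h : ∀ a ∈ s, ∀ b ∈ t, ⁅a, b⁆ ∈ p) :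
    ∀ x ∈ Submodule.span ℂ s, ∀ y ∈ Submodule.span ℂ t, ⁅x, y⁆ ∈ p := by
  intro x hx
  induction hx using Submodule.span_induction with
  | mem a ha =>
    intro y hy
    induction hy using Submodule.span_induction with
    | mem b hb => exact h a ha b hb
    | zero => simp
    | add b c _ _ hb hc => rw [lie_add]; exact add_mem hb hc
    | smul c b _ hb => rw [lie_smul]; exact Submodule.smul_mem _ _ hb
  | zero => intro y hy; simp
  | add a b _ _ ha hb => intro y hy; rw [add_lie]; exact add_mem (ha y hy) (hb y hy)
  | smul c a _ ha => intro y hy; rw [smul_lie]; exact Submodule.smul_mem _ _ (ha y hy)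

section Main

variable {N : ℕ}

lemma patA_lie (z w : Fin N) (hzw : z ≠ w) {a b : Matrix (Fin N) (Fin N) ℂ}
    (ha : ∃ i j : Fin N, a = E N i j ∧ ((i = z ∧ j ≠ z) ∨ (j = w ∧ i ≠ w)))
    (hb : ∃ i j : Fin N, b = E N i j ∧ ((i = z ∧ j ≠ z) ∨ (j = w ∧ i ≠ w))) :
    ⁅a, b⁆ ∈ Submodule.span ℂ ({E N z w} : Set (Matrix (Fin N) (Fin N) ℂ)) := by
  obtain ⟨i, j, rfl, hij⟩ := ha
  obtain ⟨k, l, rfl, hkl⟩ := hb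
  rw [lie_E_E]
  refine sub_mem ?_ ?_
  · split_ifs with h
    · have hfin : i = z ∧ l = w := by
        rcases hij with ⟨h1, h2⟩ | ⟨h1, h2⟩ <;> rcases hkl with ⟨h3, h4⟩ | ⟨h3, h4⟩
        · exact absurd (h.trans h3) h2
        · exact ⟨h1, h3⟩
        · exact absurd (h1.symm.trans (h.trans h3)).symm hzw
        · exact absurd (h.symm.trans h1) h4
      rw [hfin.1, hfin.2]; exact Submodule.subset_span rfl
    · exact zero_mem _
  · split_ifs with h
    · have hfin : k = z ∧ j = w := by
        rcases hkl with ⟨h3, h4⟩ | ⟨h3, h4⟩ <;> rcases hij with ⟨h1, h2⟩ | ⟨h1, h2⟩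
        · exact absurd (h.trans h1) h4
        · exact ⟨h3, h1⟩
        · exact absurd (h3.symm.trans (h.trans h1)) hzw.symm
        · exact absurd (h.symm.trans h3) h2
      rw [hfin.1, hfin.2]; exact Submodule.subset_span rfl
    · exact zero_mem _

lemma lie_H (z w : Fin N) (hzw : z ≠ w) (i j : Fin N)
    (hij : (i = z ∧ j ≠ z) ∨ (j = w ∧ i ≠ w)) :
    ⁅((1 : ℂ) / 2) • (E N z z - E N w w), E N i j⁆ =
      ((((if z = i then 1 else 0) + (if j = w then 1 else 0)) : ℂ) / 2) • E N i j := by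
  have hjz : j ≠ z := by
    rcases hij with ⟨_, h⟩ | ⟨h1, _⟩
    · exact h
    · rw [h1]; exact hzw.symm
  have hwi : w ≠ i := by
    rcases hij with ⟨h1, _⟩ | ⟨_, h2⟩
    · rw [h1]; exact hzw.symm
    · exact fun he => h2 he.symm
  rw [smul_lie, sub_lie, lie_E_E, lie_E_E, if_neg hjz, if_neg hwi]
  by_cases h1 : z = i <;> by_cases h2 : j = w <;>
    simp only [h1, h2, if_true, if_false, eq_self_iff_true, if_neg, if_pos] <;>
    first
      | module
      | module
      | skip

theorem main (N : ℕ) (hN : 3 ≤ N) (z w : Fin N) (hz : (z : ℕ) = 0)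
    (hw : (w : ℕ) = N - 1)
    (S : Set (Matrix (Fin N) (Fin N) ℂ))
    (hS : S = insert (((1 : ℂ) / 2) • (E N z z - E N w w))
        (insert (E N z w)
          {m | ∃ s : Fin N, 0 < s.val ∧ s.val < N - 1 ∧
            (m = E N z s ∨ m = E N s w)})) :
    (∀ x ∈ Submodule.span ℂ S, ∀ y ∈ Submodule.span ℂ S,
      ⁅x, y⁆ ∈ Submodule.span ℂ S) ∧
    (∃ K : LieSubalgebra ℂ (Matrix (Fin N) (Fin N) ℂ),
      K.toSubmodule = Submodule.span ℂ S ∧ LieAlgebra.IsSolvable K) ∧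
    Module.finrank ℂ ↥(Submodule.span ℂ S) = 2 * N - 2 := by
  subst hS
  set H : Matrix (Fin N) (Fin N) ℂ := ((1 : ℂ) / 2) • (E N z z - E N w w) with hH
  set T0 : Set (Matrix (Fin N) (Fin N) ℂ) :=
    {m | ∃ s : Fin N, 0 < s.val ∧ s.val < N - 1 ∧ (m = E N z s ∨ m = E N s w)} with hT0
  set T1 : Set (Matrix (Fin N) (Fin N) ℂ) := insert (E N z w) T0 with hT1
  set S : Set (Matrix (Fin N) (Fin N) ℂ) := insert H T1 with hSdef
  have hzw : z ≠ w := Fin.ne_of_val_ne (by omega)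
  have hpat : ∀ m ∈ T1, ∃ i j : Fin N, m = E N i j ∧
      ((i = z ∧ j ≠ z) ∨ (j = w ∧ i ≠ w)) := by
    intro m hm
    rcases Set.mem_insert_iff.mp hm with rfl | ⟨s, hs1, hs2, rfl | rfl⟩
    · exact ⟨z, w, rfl, Or.inl ⟨rfl, hzw.symm⟩⟩
    · exact ⟨z, s, rfl, Or.inl ⟨rfl, Fin.ne_of_val_ne (by omega)⟩⟩
    · exact ⟨s, w, rfl, Or.inr ⟨rfl, Fin.ne_of_val_ne (by omega)⟩⟩
  have hSS : ∀ a ∈ S, ∀ b ∈ S, ⁅a, b⁆ ∈ Submodule.span ℂ T1 := by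
    intro a ha b hb
    rcases Set.mem_insert_iff.mp ha with rfl | haT1
    · rcases Set.mem_insert_iff.mp hb with rfl | hbT1
      · rw [lie_self]; exact zero_mem _
      · obtain ⟨i, j, rfl, hij⟩ := hpat b hbT1
        rw [hH, lie_H z w hzw i j hij]
        exact Submodule.smul_mem _ _ (Submodule.subset_span hbT1)
    · rcases Set.mem_insert_iff.mp hb with rfl | hbT1
      · rw [← lie_skew]
        obtain ⟨i, j, rfl, hij⟩ := hpat a haT1
        rw [hH, lie_H z w hzw i j hij]
        exact neg_mem (Submodule.smul_mem _ _ (Submodule.subset_span haT1))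
      · refine Submodule.span_mono ?_ (patA_lie z w hzw (hpat a haT1) (hpat b hbT1))
        exact Set.singleton_subset_iff.mpr (Set.mem_insert _ _)
  have part1 : ∀ x ∈ Submodule.span ℂ S, ∀ y ∈ Submodule.span ℂ S,
      ⁅x, y⁆ ∈ Submodule.span ℂ S := fun x hx y hy =>
    Submodule.span_mono (Set.subset_insert _ _) (lie_mem_span_aux hSS x hx y hy)
  -- the Lie subalgebra
  set K : LieSubalgebra ℂ (Matrix (Fin N) (Fin N) ℂ) :=
    { Submodule.span ℂ S with
      lie_mem' := fun {x y} hx hy => part1 x hx y hy } with hK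
  set W1 : Submodule ℂ (Matrix (Fin N) (Fin N) ℂ) := Submodule.span ℂ T1 with hW1
  set W2 : Submodule ℂ (Matrix (Fin N) (Fin N) ℂ) :=
    Submodule.span ℂ ({E N z w} : Set (Matrix (Fin N) (Fin N) ℂ)) with hW2
  have hKW1 : ∀ x ∈ Submodule.span ℂ S, ∀ y ∈ W1, ⁅x, y⁆ ∈ W1 :=
    lie_mem_span_aux (fun a ha b hb => hSS a ha b (Set.mem_insert_of_mem _ hb))
  have hKK : ∀ x ∈ Submodule.span ℂ S, ∀ y ∈ Submodule.span ℂ S, ⁅x, y⁆ ∈ W1 :=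
    lie_mem_span_aux hSS
  have hW1W1 : ∀ x ∈ W1, ∀ y ∈ W1, ⁅x, y⁆ ∈ W2 :=
    lie_mem_span_aux (fun a ha b hb => patA_lie z w hzw (hpat a ha) (hpat b hb))
  have hKW2 : ∀ x ∈ Submodule.span ℂ S, ∀ y ∈ W2, ⁅x, y⁆ ∈ W2 := by
    refine lie_mem_span_aux ?_
    intro a ha b hb
    rcases hb with rfl
    rcases Set.mem_insert_iff.mp ha with rfl | haT1
    · rw [hH, lie_H z w hzw z w (Or.inl ⟨rfl, hzw.symm⟩)]
      exact Submodule.smul_mem _ _ (Submodule.subset_span rfl)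
    · exact patA_lie z w hzw (hpat a haT1) ⟨z, w, rfl, Or.inl ⟨rfl, hzw.symm⟩⟩
  have hW2W2 : ∀ x ∈ W2, ∀ y ∈ W2, ⁅x, y⁆ ∈ (⊥ : Submodule ℂ (Matrix (Fin N) (Fin N) ℂ)) := by
    refine lie_mem_span_aux ?_
    intro a ha b hb
    rcases ha with rfl
    rcases hb with rfl
    rw [lie_self]; exact zero_mem _
  set I1 : LieIdeal ℂ K :=
    { toSubmodule := W1.comap (K.incl : K →ₗ⁅ℂ⁆ _).toLinearMap
      lie_mem := fun {x m} hm => hKW1 _ x.2 _ hm } with hI1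
  set I2 : LieIdeal ℂ K :=
    { toSubmodule := W2.comap (K.incl : K →ₗ⁅ℂ⁆ _).toLinearMap
      lie_mem := fun {x m} hm => hKW2 _ x.2 _ hm } with hI2
  have step1 : LieAlgebra.derivedSeries ℂ K 1 ≤ I1 := by
    rw [LieAlgebra.derivedSeries_def, LieAlgebra.derivedSeriesOfIdeal_succ,
      LieAlgebra.derivedSeriesOfIdeal_zero, LieSubmodule.lieIdeal_oper_eq_span,
      LieSubmodule.lieSpan_le]
    rintro m ⟨x, n, rfl⟩
    exact hKK _ (x : K).2 _ (n : K).2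
  have step21 : ⁅I1, I1⁆ ≤ I2 := by
    rw [LieSubmodule.lieIdeal_oper_eq_span, LieSubmodule.lieSpan_le]
    rintro m ⟨x, n, rfl⟩
    exact hW1W1 _ x.2 _ n.2
  have step2 : LieAlgebra.derivedSeries ℂ K 2 ≤ I2 := by
    rw [LieAlgebra.derivedSeries_def, LieAlgebra.derivedSeriesOfIdeal_succ]
    exact le_trans (LieSubmodule.mono_lie step1 step1) step21
  have step31 : ⁅I2, I2⁆ ≤ ⊥ := by
    rw [LieSubmodule.lieIdeal_oper_eq_span, LieSubmodule.lieSpan_le]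
    rintro m ⟨x, n, rfl⟩
    rw [SetLike.mem_coe, LieSubmodule.mem_bot]
    have h0 := hW2W2 _ x.2 _ n.2
    rw [Submodule.mem_bot] at h0
    exact Subtype.ext h0
  have step3 : LieAlgebra.derivedSeries ℂ K 3 = ⊥ := by
    refine le_bot_iff.mp ?_
    rw [LieAlgebra.derivedSeries_def, LieAlgebra.derivedSeriesOfIdeal_succ]
    exact le_trans (LieSubmodule.mono_lie step2 step2) step31
  have hsolv : LieAlgebra.IsSolvable K := LieAlgebra.IsSolvable.mk step3
  -- dimension
  have hjlt : ∀ j : Fin (N - 1), (j : ℕ) < N := fun j => lt_of_lt_of_le j.2 (Nat.sub_le N 1)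
  set b : (Fin (N - 1) ⊕ Fin (N - 1)) → Matrix (Fin N) (Fin N) ℂ :=
    Sum.elim (fun j => if (j : ℕ) = 0 then H else E N z ⟨(j : ℕ), hjlt j⟩)
      (fun j => E N ⟨(j : ℕ), hjlt j⟩ w) with hb
  have hrange : Set.range b = S := by
    ext m
    constructor
    · rintro ⟨i, rfl⟩
      match i with
      | Sum.inl j =>
        by_cases hj : (j : ℕ) = 0
        · simp only [hb, Sum.elim_inl, if_pos hj]
          exact Set.mem_insert _ _
        · simp only [hb, Sum.elim_inl, if_neg hj]
          refine Set.mem_insert_of_mem _ (Set.mem_insert_of_mem _ ?_)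
          exact ⟨⟨(j : ℕ), hjlt j⟩, by simpa using Nat.pos_of_ne_zero hj, by simpa using j.2,
            Or.inl rfl⟩
      | Sum.inr j =>
        by_cases hj : (j : ℕ) = 0
        · have : (⟨(j : ℕ), hjlt j⟩ : Fin N) = z := Fin.ext (by simp only [Fin.val_mk]; omega)
          simp only [hb, Sum.elim_inr, this]
          exact Set.mem_insert_of_mem _ (Set.mem_insert _ _)
        · refine Set.mem_insert_of_mem _ (Set.mem_insert_of_mem _ ?_)
          exact ⟨⟨(j : ℕ), hjlt j⟩, by simpa using Nat.pos_of_ne_zero hj, by simpa using j.2,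
            Or.inr rfl⟩
    · intro hm
      rcases Set.mem_insert_iff.mp hm with rfl | hm1
      · refine ⟨Sum.inl ⟨0, by omega⟩, ?_⟩
        simp [hb]
      · rcases Set.mem_insert_iff.mp hm1 with rfl | ⟨s, hs1, hs2, rfl | rfl⟩
        · refine ⟨Sum.inr ⟨0, by omega⟩, ?_⟩
          have : (⟨(0 : ℕ), by omega⟩ : Fin N) = z := Fin.ext (by simp only [Fin.val_mk]; omega)
          simp [hb, this]
        · refine ⟨Sum.inl ⟨(s : ℕ), by omega⟩, ?_⟩
          have hs0 : ¬((⟨(s : ℕ), by omega⟩ : Fin (N - 1)) : ℕ) = 0 := by simpa using hs1.ne'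
          have : (⟨(s : ℕ), hjlt ⟨(s : ℕ), by omega⟩⟩ : Fin N) = s := Fin.ext rfl
          simp [hb, hs0, this]
        · refine ⟨Sum.inr ⟨(s : ℕ), by omega⟩, ?_⟩
          have : (⟨(s : ℕ), hjlt ⟨(s : ℕ), by omega⟩⟩ : Fin N) = s := Fin.ext rfl
          simp [hb, this]
  set Phi : Matrix (Fin N) (Fin N) ℂ →ₗ[ℂ] ((Fin (N - 1) ⊕ Fin (N - 1)) → ℂ) :=
    { toFun := fun m => Sum.elim
        (fun j => if (j : ℕ) = 0 then 2 * m z z else m z ⟨(j : ℕ), hjlt j⟩)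
        (fun j => m ⟨(j : ℕ), hjlt j⟩ w)
      map_add' := by
        intro m n
        funext i
        match i with
        | Sum.inl j => by_cases hj : (j : ℕ) = 0 <;>
            simp [hj, Matrix.add_apply] <;> ring
        | Sum.inr j => simp [Matrix.add_apply]
      map_smul' := by
        intro c m
        funext i
        match i with
        | Sum.inl j => by_cases hj : (j : ℕ) = 0 <;>
            simp [hj, Matrix.smul_apply, smul_eq_mul] <;> ring
        | Sum.inr j => simp [Matrix.smul_apply] } with hPhi
  have hPhib : ∀ i, Phi (b i) = Pi.single i (1 : ℂ) := by
    intro i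
    funext k
    have hk1 : ∀ j : Fin (N - 1), ((⟨(j : ℕ), hjlt j⟩ : Fin N) = z ↔ (j : ℕ) = 0) := by
      intro j; rw [Fin.ext_iff]; simp only [Fin.val_mk]; omega
    have hk2 : ∀ j : Fin (N - 1), ((⟨(j : ℕ), hjlt j⟩ : Fin N) ≠ w) := by
      intro j; rw [Ne, Fin.ext_iff]; simp only [Fin.val_mk]; omega
    match i, k with
    | Sum.inl j, Sum.inl j' =>
      by_cases hj : (j : ℕ) = 0 <;> by_cases hj' : (j' : ℕ) = 0
      · have hjj' : j' = j := Fin.ext (by omega)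
        simp [hPhi, hb, hj, hj', hjj', hH, Matrix.smul_apply, Matrix.sub_apply, E_apply,
          hzw, hzw.symm, Pi.single_apply]
      · have hjj' : ¬ j' = j := by rw [Fin.ext_iff]; omega
        simp [hPhi, hb, hj, hj', hjj', hH, Matrix.smul_apply, Matrix.sub_apply, E_apply,
          hzw, hzw.symm, Pi.single_apply, (hk1 j').not.mpr hj', Ne.symm ((hk1 j').not.mpr hj')]
      · have hjj' : ¬ j' = j := by rw [Fin.ext_iff]; omega
        simp [hPhi, hb, hj, hj', hjj', E_apply, Pi.single_apply, (hk1 j).not.mpr hj,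
          Ne.symm ((hk1 j).not.mpr hj)]
      · simp only [hPhi, hb, Sum.elim_inl, if_neg hj, if_neg hj', LinearMap.coe_mk,
          AddHom.coe_mk, E_apply, Pi.single_apply, Sum.inl.injEq]
        by_cases hjj' : j' = j
        · simp [hjj']
        · have : ¬((⟨(j' : ℕ), hjlt j'⟩ : Fin N) = ⟨(j : ℕ), hjlt j⟩) := by
            rw [Fin.ext_iff]; simp only [Fin.val_mk]
            rw [Fin.ext_iff] at hjj'; omega
          rw [Fin.ext_iff] at hjj'
          simp only [Fin.ext_iff, Fin.val_mk] at this ⊢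
          simp [this]
          omega
    | Sum.inl j, Sum.inr j' =>
      by_cases hj : (j : ℕ) = 0 <;>
        simp [hPhi, hb, hj, hH, Matrix.smul_apply, Matrix.sub_apply, E_apply, Pi.single_apply,
          hzw.symm, hk2 j', (hk2 j').symm, hzw, hk2 j, (hk2 j).symm]
    | Sum.inr j, Sum.inl j' =>
      by_cases hj' : (j' : ℕ) = 0 <;>
        simp [hPhi, hb, hj', E_apply, Pi.single_apply, hzw, hzw.symm, hk2 j', hk2 j,
          (hk2 j).symm, (hk2 j').symm]
    | Sum.inr j, Sum.inr j' =>
      simp only [hPhi, hb, Sum.elim_inr, LinearMap.coe_mk, AddHom.coe_mk, E_apply,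
        Pi.single_apply, Sum.inr.injEq]
      by_cases hjj' : j' = j
      · simp [hjj']
      · have hvv : ¬((⟨(j : ℕ), hjlt j⟩ : Fin N) = ⟨(j' : ℕ), hjlt j'⟩) := by
          rw [Fin.ext_iff]; simp only [Fin.val_mk]
          rw [Fin.ext_iff] at hjj'; omega
        rw [Fin.ext_iff] at hjj'
        simp [hvv, Fin.ext_iff, hjj']
  have hli : LinearIndependent ℂ b := by
    apply LinearIndependent.of_comp Phi
    have h2 : (⇑Phi ∘ b) = fun i => Pi.single i (1 : ℂ) := funext hPhib
    rw [h2]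
    have h3 : ⇑(Pi.basisFun ℂ (Fin (N - 1) ⊕ Fin (N - 1))) =
        fun i => Pi.single i (1 : ℂ) := by
      funext i
      simp [Pi.basisFun_apply]
    rw [← h3]
    exact (Pi.basisFun ℂ (Fin (N - 1) ⊕ Fin (N - 1))).linearIndependent
  have hdim : Module.finrank ℂ ↥(Submodule.span ℂ S) = 2 * N - 2 := by
    rw [← hrange, finrank_span_eq_card hli]
    simp only [Fintype.card_sum, Fintype.card_fin]
    omega
  exact ⟨part1, ⟨K, rfl, hsolv⟩, hdim⟩

end Main


/-- for `N ≥ 3`, the complex span `L` of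
`{(1/2)(E_{11} - E_{NN}), E_{1N}} ∪ {E_{1s} : 2 ≤ s ≤ N-1} ∪ {E_{sN} : 2 ≤ s ≤ N-1}`
(1-based indices; `s` ranges 0-based over `0 < s < N-1`) is closed under the Lie bracket,
is a solvable Lie algebra, and has complex dimension `2N - 2`. -/
theorem carrier_subalgebra_solvable (N : ℕ) (hN : 3 ≤ N)
    (S : Set (Matrix (Fin N) (Fin N) ℂ))
    (hS : S = insert
        (((1 : ℂ) / 2) •
          (E N ⟨0, by omega⟩ ⟨0, by omega⟩ - E N ⟨N - 1, by omega⟩ ⟨N - 1, by omega⟩))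
        (insert (E N ⟨0, by omega⟩ ⟨N - 1, by omega⟩)
          {m | ∃ s : Fin N, 0 < s.val ∧ s.val < N - 1 ∧
            (m = E N ⟨0, by omega⟩ s ∨ m = E N s ⟨N - 1, by omega⟩)})) :
    (∀ x ∈ Submodule.span ℂ S, ∀ y ∈ Submodule.span ℂ S, ⁅x, y⁆ ∈ Submodule.span ℂ S) ∧
    (∃ K : LieSubalgebra ℂ (Matrix (Fin N) (Fin N) ℂ),
      K.toSubmodule = Submodule.span ℂ S ∧ LieAlgebra.IsSolvable K) ∧
    Module.finrank ℂ ↥(Submodule.span ℂ S) = 2 * N - 2 := by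
  exact main N hN ⟨0, by omega⟩ ⟨N - 1, by omega⟩ rfl rfl S hS
end
end
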